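/- arXiv:1905.11838 — 2 statements merged into one kernel-verified Lean document; each statement's English description precedes it below -/
import Mathlib

section
/- Let U = {z_1,…,z_n} be a universe, let S_1,…,S_t be nonempty subsets of U, and let k be a positive integer with k ≤ n. Fix the candidate set C = {x_1,…,x_t, y, d}, a normalized score vector α of length t+2, and for each ordered pair (u,v) of distinct candidates fix a profile P_u^v as in the context. Define voter groups: for each i ∈ [n], G_i consists of 2 copies of P_{x_j}^d for every j ∈ [t] with z_i ∈ S_j; and Ĝ consists of 2tn copies of P_d^{x_j} for every j ∈ [t] together with 2tn − 1 copies of P_d^y. Then the Optimal Defense instance (C, {G_1,…,G_n, Ĝ}, k_a = n, k_d = k+1) for the scoring rule of α is a Yes instance if and only if there exists W ⊆ U with |W| = k and W ∩ S_j ≠ ∅ for every j ∈ [t] (i.e., the Hitting Set instance (U, {S_1,…,S_t}, k) is a Yes instance). -/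
open Finset

/-- A vote over a candidate set `C` with `m` candidates: a ranking assigning each
candidate its position. -/
abbrev Vote (C : Type*) (m : ℕ) := C ≃ Fin m

/-- The score of candidate `x` in profile `P` under score vector `α`. -/
def score {C : Type*} {m : ℕ} (α : Fin m → ℝ) (P : Multiset (Vote C m)) (x : C) : ℝ :=
  (P.map fun v => α (v x)).sum

/-- The scoring rule of `α`: the set of candidates with maximum score. -/
def scoringRule {C : Type*} {m : ℕ} (α : Fin m → ℝ) (P : Multiset (Vote C m)) : Set C :=
  {x | ∀ y, score α P y ≤ score α P x}

/-- `margin P x y`: number of votes preferring `x` to `y` minus those preferring `y` to `x`. -/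
def margin {C : Type*} {m : ℕ} (P : Multiset (Vote C m)) (x y : C) : ℤ :=
  ((P.filter fun v => v x < v y).card : ℤ) - ((P.filter fun v => v y < v x).card : ℤ)

/-- `c` is the Condorcet winner of `P`. -/
def CondorcetWinner {C : Type*} {m : ℕ} (P : Multiset (Vote C m)) (c : C) : Prop :=
  ∀ y, y ≠ c → 0 < margin P c y

/-- The Condorcet voting rule: `{c}` if a Condorcet winner `c` exists, all candidates otherwise. -/
def condorcetRule {C : Type*} {m : ℕ} (P : Multiset (Vote C m)) : Set C :=
  {x | CondorcetWinner P x ∨ ¬ ∃ c, CondorcetWinner P c}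

/-- `α` is monotone nonincreasing (part of being a score vector). -/
def IsMonotoneScore {m : ℕ} (α : Fin m → ℝ) : Prop :=
  ∀ i j : Fin m, i ≤ j → α j ≤ α i

/-- `α` is normalized: some consecutive difference is `1` and all later entries are `0`. -/
def IsNormalized {m : ℕ} (α : Fin m → ℝ) : Prop :=
  ∃ j : ℕ, ∃ hj : j + 1 < m, α ⟨j, Nat.lt_of_succ_lt hj⟩ - α ⟨j + 1, hj⟩ = 1 ∧
    ∀ ℓ : Fin m, j < (ℓ : ℕ) → α ℓ = 0

/-- `Q` is a profile `P_u^v`: it has `m` votes and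
`s_Q(u) + 1 = s_Q(v) - 1 = s_Q(z)` for every `z ∉ {u, v}`. -/
def PfGood {C : Type*} {m : ℕ} (α : Fin m → ℝ) (Q : Multiset (Vote C m)) (u v : C) : Prop :=
  Multiset.card Q = m ∧ score α Q u + 1 = score α Q v - 1 ∧
    ∀ z : C, z ≠ u → z ≠ v → score α Q z = score α Q v - 1

/-- The Optimal Defense instance with groups `G`, attacker resource `ka` and defender
resource `kd` is a Yes instance for voting rule `r`. -/
def DefenseYes {C : Type*} {m N : ℕ} (r : Multiset (Vote C m) → Set C)
    (G : Fin N → Multiset (Vote C m)) (ka kd : ℕ) : Prop :=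
  ∃ I : Finset (Fin N), I.card ≤ kd ∧
    ∀ I' : Finset (Fin N), Disjoint I I' → I'.card ≤ ka →
      r (∑ i ∈ Finset.univ \ I', G i) = r (∑ i, G i)

/-- The Optimal Attack instance with groups `G`, attacker resource `ka` and defender
resource `kd` is a Yes instance for voting rule `r`. -/
def AttackYes {C : Type*} {m N : ℕ} (r : Multiset (Vote C m) → Set C)
    (G : Fin N → Multiset (Vote C m)) (ka kd : ℕ) : Prop :=
  ∃ I : Finset (Fin N), I.card ≤ ka ∧
    ∀ I' : Finset (Fin N), I'.card ≤ kd →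
      r (∑ i ∈ Finset.univ \ (I \ I'), G i) ≠ r (∑ i, G i)

section AuxScore
variable {C : Type} [DecidableEq C] {m : ℕ} (α : Fin m → ℝ)

lemma score_add' (P Q : Multiset (Vote C m)) (c : C) :
    score α (P + Q) c = score α P c + score α Q c := by
  simp [score]

lemma score_nsmul' (N : ℕ) (P : Multiset (Vote C m)) (c : C) :
    score α (N • P) c = N * score α P c := by
  induction N with
  | zero => simp [score]
  | succ k ih => rw [succ_nsmul, score_add', ih]; push_cast; ring

lemma score_sum' {ι : Type*} (s : Finset ι) (P : ι → Multiset (Vote C m)) (c : C) :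
    score α (∑ i ∈ s, P i) c = ∑ i ∈ s, score α (P i) c := by
  induction s using Finset.cons_induction with
  | empty => simp [score]
  | cons a s ha ih => rw [Finset.sum_cons, Finset.sum_cons, score_add', ih]

def eps (u v c : C) : ℝ := (if c = v then 1 else 0) - (if c = u then 1 else 0)

lemma score_pf {u v : C} (huv : u ≠ v) {Q : Multiset (Vote C m)} (hQ : PfGood α Q u v)
    (c : C) : score α Q c = (score α Q v - 1) + eps u v c := by
  obtain ⟨-, h1, h2⟩ := hQ
  unfold eps
  by_cases hcv : c = v
  · subst hcv; simp [Ne.symm huv]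
  · by_cases hcu : c = u
    · subst hcu; rw [if_neg hcv, if_pos rfl]; linarith
    · rw [h2 c hcu hcv]; simp [hcv, hcu]

lemma sum_K_split {n : ℕ} (f : Fin (n+1) → ℝ) (K : Finset (Fin (n+1))) :
    ∑ i ∈ K, f i =
      (∑ i0 ∈ univ.filter (fun i0 => Fin.castSucc i0 ∈ K), f (Fin.castSucc i0)) +
      (if Fin.last n ∈ K then f (Fin.last n) else 0) := by
  have h : ∑ i ∈ K, f i = ∑ i : Fin (n+1), if i ∈ K then f i else 0 := by
    rw [Finset.sum_ite_mem, univ_inter]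
  rw [h, Fin.sum_univ_castSucc, Finset.sum_filter]

lemma win_singleton {f : C → ℝ} {w : C} (h : ∀ c, c ≠ w → f c < f w) :
    {c | ∀ b, f b ≤ f c} = {w} := by
  ext c
  simp only [Set.mem_setOf_eq, Set.mem_singleton_iff]
  constructor
  · intro hc
    by_contra hcw
    exact absurd (hc w) (not_le.mpr (h c hcw))
  · rintro rfl b
    rcases eq_or_ne b c with rfl | hb
    · exact le_refl _
    · exact le_of_lt (h b hb)

end AuxScore

/-- the Hitting Set reduction instance for Optimal Defense under a
scoring rule. -/
theorem stmt6 (n t : ℕ) (S : Fin t → Finset (Fin n)) (hS : ∀ j, (S j).Nonempty)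
    (k : ℕ) (hk : 0 < k) (hkn : k ≤ n)
    {C : Type} [Fintype C] [DecidableEq C] (hC : Fintype.card C = t + 2)
    (x : Fin t → C) (hxinj : Function.Injective x) (y d : C) (hyd : y ≠ d)
    (hxy : ∀ j, x j ≠ y) (hxd : ∀ j, x j ≠ d)
    (α : Fin (t + 2) → ℝ) (hmono : IsMonotoneScore α) (hnorm : IsNormalized α)
    (Pf : C → C → Multiset (Vote C (t + 2)))
    (hPf : ∀ u v : C, u ≠ v → PfGood α (Pf u v) u v) :
    DefenseYes (scoringRule α)
      (Fin.snoc
        (fun i : Fin n => ∑ j ∈ Finset.univ.filter (fun j => i ∈ S j), 2 • Pf (x j) d)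
        ((∑ j, (2 * t * n) • Pf d (x j)) + (2 * t * n - 1) • Pf d y))
      n (k + 1) ↔
    ∃ W : Finset (Fin n), W.card = k ∧ ∀ j, (W ∩ S j).Nonempty := by
  classical
  have hn : 0 < n := lt_of_lt_of_le hk hkn
  set G : Fin (n+1) → Multiset (Vote C (t+2)) :=
    Fin.snoc
      (fun i : Fin n => ∑ j ∈ Finset.univ.filter (fun j => i ∈ S j), 2 • Pf (x j) d)
      ((∑ j, (2 * t * n) • Pf d (x j)) + (2 * t * n - 1) • Pf d y) with hG
  rcases Nat.eq_zero_or_pos t with ht0 | ht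
  · -- degenerate case t = 0 : all groups are empty
    subst ht0
    have hGz : ∀ i, G i = 0 := by
      intro i
      refine Fin.lastCases ?_ ?_ i
      · rw [hG, Fin.snoc_last]; simp
      · intro i0
        rw [hG, Fin.snoc_castSucc]
        simp
    have hall : ∀ K : Finset (Fin (n+1)), ∑ i ∈ K, G i = 0 :=
      fun K => Finset.sum_eq_zero fun i _ => hGz i
    constructor
    · intro _
      obtain ⟨W, hWsub, hWcard⟩ :=
        Finset.exists_subset_card_eq (s := (univ : Finset (Fin n))) (by simpa using hkn)
      exact ⟨W, hWcard, fun j => j.elim0⟩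
    · intro _
      refine ⟨∅, by simp, fun I' _ _ => ?_⟩
      rw [hall, show (∑ i, G i) = ∑ i ∈ univ, G i from rfl, hall]
  · -- main case t ≥ 1
    have hT1 : (1:ℝ) ≤ (t:ℝ) := by exact_mod_cast ht
    have hN1 : (1:ℝ) ≤ (n:ℝ) := by exact_mod_cast hn
    have h2tn : 1 ≤ 2 * t * n := Nat.one_le_iff_ne_zero.mpr (by positivity)
    have hcast : ((2*t*n - 1 : ℕ) : ℝ) = 2*(t:ℝ)*(n:ℝ) - 1 := by
      push_cast [Nat.cast_sub h2tn]; ring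
    set ds : Fin n → C → ℝ :=
      fun i0 c => ∑ j ∈ univ.filter (fun j => i0 ∈ S j), 2 * eps (x j) d c with hds
    set dh : C → ℝ :=
      (fun c => (∑ j : Fin t, ((2*t*n : ℕ) : ℝ) * eps d (x j) c)
        + ((2*t*n - 1 : ℕ) : ℝ) * eps d y c) with hdh
    set AA : Finset (Fin (n+1)) → Finset (Fin n) :=
      fun K => univ.filter (fun i0 => Fin.castSucc i0 ∈ K) with hAA
    set E : Finset (Fin (n+1)) → C → ℝ :=
      fun K c => (∑ i0 ∈ AA K, ds i0 c) + (if Fin.last n ∈ K then dh c else 0) with hE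
    -- bases
    have hbase1 : ∀ i0 : Fin n, ∃ B : ℝ, ∀ c,
        score α (G (Fin.castSucc i0)) c = B + ds i0 c := by
      intro i0
      refine ⟨∑ j ∈ univ.filter (fun j => i0 ∈ S j), 2 * (score α (Pf (x j) d) d - 1),
        fun c => ?_⟩
      rw [hG, Fin.snoc_castSucc, score_sum']
      simp only [hds]
      rw [← Finset.sum_add_distrib]
      refine Finset.sum_congr rfl fun j _ => ?_
      rw [score_nsmul', score_pf α (hxd j) (hPf _ _ (hxd j)) c]
      push_cast
      ring
    have hbase2 : ∃ B : ℝ, ∀ c, score α (G (Fin.last n)) c = B + dh c := by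
      refine ⟨(∑ j, ((2*t*n : ℕ) : ℝ) * (score α (Pf d (x j)) (x j) - 1))
        + ((2*t*n - 1 : ℕ) : ℝ) * (score α (Pf d y) y - 1), fun c => ?_⟩
      have h1 : score α (∑ j, (2*t*n) • Pf d (x j)) c
          = (∑ j, ((2*t*n:ℕ):ℝ) * (score α (Pf d (x j)) (x j) - 1))
            + ∑ j, ((2*t*n:ℕ):ℝ) * eps d (x j) c := by
        rw [score_sum', ← Finset.sum_add_distrib]
        refine Finset.sum_congr rfl fun j _ => ?_
        rw [score_nsmul', score_pf α (Ne.symm (hxd j)) (hPf _ _ (Ne.symm (hxd j))) c]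
        ring
      rw [hG, Fin.snoc_last, score_add', h1, score_nsmul',
        score_pf α (Ne.symm hyd) (hPf _ _ (Ne.symm hyd)) c]
      simp only [hdh]
      ring
    have hbaseK : ∀ K : Finset (Fin (n+1)), ∃ B : ℝ, ∀ c,
        score α (∑ i ∈ K, G i) c = B + E K c := by
      intro K
      choose B1 hB1 using hbase1
      obtain ⟨B2, hB2⟩ := hbase2
      refine ⟨(∑ i0 ∈ AA K, B1 i0) + (if Fin.last n ∈ K then B2 else 0), fun c => ?_⟩
      have hs : ∑ i0 ∈ AA K, score α (G (Fin.castSucc i0)) c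
          = (∑ i0 ∈ AA K, B1 i0) + ∑ i0 ∈ AA K, ds i0 c := by
        rw [← Finset.sum_add_distrib]
        exact Finset.sum_congr rfl fun i0 _ => hB1 i0 c
      rw [score_sum', sum_K_split (fun i => score α (G i) c) K]
      simp only [hE, hAA] at *
      rw [hs]
      split_ifs with h
      · rw [hB2 c]; ring
      · ring
    have hwin : ∀ K : Finset (Fin (n+1)),
        scoringRule α (∑ i ∈ K, G i) = {c | ∀ b, E K b ≤ E K c} := by
      intro K
      obtain ⟨B, hB⟩ := hbaseK K
      ext c
      simp only [scoringRule, Set.mem_setOf_eq, hB]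
      exact forall_congr' fun b => by constructor <;> intro h <;> linarith
    -- eps evaluations
    have heps_xd_y : ∀ j, eps (x j) d y = (0:ℝ) := fun j => by
      simp [eps, hyd, Ne.symm (hxy j)]
    have heps_xd_d : ∀ j, eps (x j) d d = (1:ℝ) := fun j => by
      simp [eps, Ne.symm (hxd j)]
    have heps_xd_x : ∀ j j0, eps (x j) d (x j0) = if j0 = j then (-1:ℝ) else 0 := by
      intro j j0
      rcases eq_or_ne j0 j with rfl | h
      · simp [eps, hxd j0]
      · simp [eps, hxd j0, h, show x j0 ≠ x j from fun hh => h (hxinj hh)]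
    have heps_xd_o : ∀ j c, c ≠ d → (∀ j', c ≠ x j') → eps (x j) d c = 0 := by
      intro j c hcd hcx
      simp [eps, hcd, hcx j]
    have heps_dx_y : ∀ j, eps d (x j) y = (0:ℝ) := fun j => by
      simp [eps, Ne.symm (hxy j), hyd]
    have heps_dx_d : ∀ j, eps d (x j) d = (-1:ℝ) := fun j => by
      simp [eps, Ne.symm (hxd j)]
    have heps_dx_x : ∀ j j0, eps d (x j) (x j0) = if j0 = j then (1:ℝ) else 0 := by
      intro j j0
      rcases eq_or_ne j0 j with rfl | h
      · simp [eps, hxd j0]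
      · simp [eps, hxd j0, h, show x j0 ≠ x j from fun hh => h (hxinj hh)]
    have heps_dx_o : ∀ j c, c ≠ d → (∀ j', c ≠ x j') → eps d (x j) c = 0 := by
      intro j c hcd hcx
      simp [eps, hcd, hcx j]
    have heps_dy_y : eps d y y = (1:ℝ) := by simp [eps, hyd]
    have heps_dy_d : eps d y d = (-1:ℝ) := by simp [eps, Ne.symm hyd]
    have heps_dy_x : ∀ j0, eps d y (x j0) = (0:ℝ) := fun j0 => by
      simp [eps, hxy j0, hxd j0]
    have heps_dy_o : ∀ c, c ≠ y → c ≠ d → eps d y c = 0 := by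
      intro c hcy hcd
      simp [eps, hcy, hcd]
    -- ds evaluations
    have hds_y : ∀ i0, ds i0 y = 0 := fun i0 => by
      simp [hds, heps_xd_y]
    have hds_d : ∀ i0, ds i0 d = 2 * ((univ.filter (fun j => i0 ∈ S j)).card : ℝ) := by
      intro i0
      simp [hds, heps_xd_d, Finset.sum_const, nsmul_eq_mul, mul_comm]
    have hds_x : ∀ i0 j0, ds i0 (x j0) = if i0 ∈ S j0 then (-2:ℝ) else 0 := by
      intro i0 j0
      simp only [hds, heps_xd_x, mul_ite, mul_neg, mul_one, mul_zero]
      rw [Finset.sum_ite_eq]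
      simp [Finset.mem_filter]
    have hds_o : ∀ i0 c, c ≠ d → (∀ j', c ≠ x j') → ds i0 c = 0 := by
      intro i0 c hcd hcx
      simp only [hds]
      exact Finset.sum_eq_zero fun j _ => by rw [heps_xd_o j c hcd hcx, mul_zero]
    -- dh evaluations
    have hdh_y : dh y = 2*(t:ℝ)*(n:ℝ) - 1 := by
      simp [hdh, heps_dx_y, heps_dy_y, hcast]
    have hdh_x : ∀ j0, dh (x j0) = 2*(t:ℝ)*(n:ℝ) := by
      intro j0
      simp only [hdh, heps_dx_x, heps_dy_x, mul_zero, add_zero, mul_ite, mul_one]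
      rw [Finset.sum_ite_eq]
      simp
    have hdh_d : dh d = -(2*(t:ℝ)*(n:ℝ)*(t:ℝ)) - (2*(t:ℝ)*(n:ℝ) - 1) := by
      simp only [hdh, heps_dx_d, heps_dy_d, mul_neg, mul_one, Finset.sum_const,
        Finset.card_univ, Fintype.card_fin, nsmul_eq_mul, hcast]
      push_cast
      ring
    have hdh_o : ∀ c, c ≠ y → c ≠ d → (∀ j', c ≠ x j') → dh c = 0 := by
      intro c hcy hcd hcx
      simp only [hdh, heps_dy_o c hcy hcd, mul_zero, add_zero]
      exact Finset.sum_eq_zero fun j _ => by rw [heps_dx_o j c hcd hcx, mul_zero]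
    -- E evaluations
    have hEy : ∀ K, Fin.last n ∈ K → E K y = 2*(t:ℝ)*(n:ℝ) - 1 := by
      intro K hlast
      simp [hE, hds_y, hlast, hdh_y]
    have hEx : ∀ K, Fin.last n ∈ K → ∀ j0,
        E K (x j0) = 2*(t:ℝ)*(n:ℝ) - 2*((AA K ∩ S j0).card : ℝ) := by
      intro K hlast j0
      simp only [hE, hds_x, hdh_x, if_pos hlast]
      rw [Finset.sum_ite_mem, Finset.sum_const, nsmul_eq_mul]
      ring
    have hEd : ∀ K, Fin.last n ∈ K →
        E K d = 2*(∑ i0 ∈ AA K, ((univ.filter (fun j => i0 ∈ S j)).card : ℝ))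
          - 2*(t:ℝ)*(n:ℝ)*(t:ℝ) - (2*(t:ℝ)*(n:ℝ) - 1) := by
      intro K hlast
      simp only [hE, hds_d, hdh_d, if_pos hlast, ← Finset.mul_sum]
      ring
    have hEo : ∀ K c, c ≠ y → c ≠ d → (∀ j', c ≠ x j') → E K c = 0 := by
      intro K c hcy hcd hcx
      simp [hE, hds_o _ c hcd hcx, hdh_o c hcy hcd hcx]
    -- the main winner computation
    have hsum_bound : ∀ K, (∑ i0 ∈ AA K, ((univ.filter (fun j => i0 ∈ S j)).card : ℝ))
        ≤ (n:ℝ)*(t:ℝ) := by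
      intro K
      calc ∑ i0 ∈ AA K, ((univ.filter (fun j => i0 ∈ S j)).card : ℝ)
          ≤ ∑ i0 ∈ (univ : Finset (Fin n)), ((univ.filter (fun j => i0 ∈ S j)).card : ℝ) :=
            Finset.sum_le_sum_of_subset_of_nonneg (Finset.subset_univ _)
              (fun i _ _ => Nat.cast_nonneg _)
        _ ≤ ∑ _i0 ∈ (univ : Finset (Fin n)), (t:ℝ) := by
            refine Finset.sum_le_sum fun i _ => ?_
            have := Finset.card_filter_le (univ : Finset (Fin t)) (fun j => i ∈ S j)
            calc ((univ.filter (fun j => i ∈ S j)).card : ℝ) ≤ ((univ : Finset (Fin t)).card : ℝ) := by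
                  exact_mod_cast this
              _ = (t:ℝ) := by simp
        _ = (n:ℝ)*(t:ℝ) := by simp [mul_comm]
    have hmain : ∀ K : Finset (Fin (n+1)), Fin.last n ∈ K →
        (∀ j, (AA K ∩ S j).Nonempty) →
        scoringRule α (∑ i ∈ K, G i) = {y} := by
      intro K hlast hhit
      rw [hwin K]
      apply win_singleton
      intro c hc
      rcases eq_or_ne c d with hcd | hcd
      · rw [hcd, hEd K hlast, hEy K hlast]
        have hb := hsum_bound K
        nlinarith
      · by_cases hcx : ∃ j0, c = x j0
        · obtain ⟨j0, rfl⟩ := hcx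
          rw [hEx K hlast j0, hEy K hlast]
          have h1 : (1:ℝ) ≤ ((AA K ∩ S j0).card : ℝ) := by
            exact_mod_cast Finset.card_pos.mpr (hhit j0)
          linarith
        · have hcx' : ∀ j', c ≠ x j' := fun j' hj' => hcx ⟨j', hj'⟩
          rw [hEo K c hc hcd hcx', hEy K hlast]
          nlinarith
    have hAAuniv : AA (univ : Finset (Fin (n+1))) = univ := by
      simp [hAA]
    have hfull : scoringRule α (∑ i, G i) = {y} := by
      refine hmain univ (mem_univ _) fun j => ?_
      rw [hAAuniv, univ_inter]
      exact hS j
    -- the {d} scenario: remove only the last group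
    have hDscen : scoringRule α (∑ i ∈ univ \ {Fin.last n}, G i) = {d} := by
      have hlast : Fin.last n ∉ (univ : Finset (Fin (n+1))) \ {Fin.last n} := by simp
      have hAK : AA ((univ : Finset (Fin (n+1))) \ {Fin.last n}) = univ := by
        simp only [hAA]
        ext i0
        simp [(Fin.castSucc_lt_last i0).ne]
      rw [hwin _]
      apply win_singleton
      have hEd' : E ((univ : Finset (Fin (n+1))) \ {Fin.last n}) d
          = 2 * ∑ i0 ∈ (univ : Finset (Fin n)), ((univ.filter (fun j => i0 ∈ S j)).card:ℝ) := by
        simp only [hE, hds_d, if_neg hlast, add_zero, ← Finset.mul_sum, hAK]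
      have hEdlb : (2:ℝ) ≤ E ((univ : Finset (Fin (n+1))) \ {Fin.last n}) d := by
        rw [hEd']
        obtain ⟨j0⟩ : Nonempty (Fin t) := ⟨⟨0, ht⟩⟩
        obtain ⟨i0, hi0⟩ := hS j0
        have h1 : (1:ℝ) ≤ ((univ.filter (fun j => i0 ∈ S j)).card : ℝ) := by
          have hmem : j0 ∈ univ.filter (fun j => i0 ∈ S j) := by simp [hi0]
          exact_mod_cast Finset.card_pos.mpr ⟨j0, hmem⟩
        have h2 : ((univ.filter (fun j => i0 ∈ S j)).card:ℝ)
            ≤ ∑ i1 ∈ (univ : Finset (Fin n)), ((univ.filter (fun j => i1 ∈ S j)).card:ℝ) :=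
          Finset.single_le_sum (f := fun i1 => ((univ.filter (fun j => i1 ∈ S j)).card:ℝ))
            (fun i _ => Nat.cast_nonneg _) (mem_univ i0)
        linarith
      intro c hc
      rcases eq_or_ne c y with hcy | hcy
      · have hy0 : E ((univ : Finset (Fin (n+1))) \ {Fin.last n}) y = 0 := by
          simp [hE, hds_y, if_neg hlast]
        rw [hcy, hy0]
        linarith
      · by_cases hcx : ∃ j0, c = x j0
        · obtain ⟨j0, rfl⟩ := hcx
          have hx0 : E ((univ : Finset (Fin (n+1))) \ {Fin.last n}) (x j0)
              = -2*((AA ((univ : Finset (Fin (n+1))) \ {Fin.last n}) ∩ S j0).card:ℝ) := by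
            simp only [hE, hds_x, if_neg hlast, add_zero]
            rw [Finset.sum_ite_mem, Finset.sum_const, nsmul_eq_mul]
            ring
          rw [hx0]
          have h0 : (0:ℝ) ≤ ((AA ((univ : Finset (Fin (n+1))) \ {Fin.last n}) ∩ S j0).card:ℝ) :=
            Nat.cast_nonneg _
          linarith
        · have hcx' : ∀ j', c ≠ x j' := fun j' hj' => hcx ⟨j', hj'⟩
          rw [hEo _ c hcy hc hcx']
          linarith
    constructor
    · rintro ⟨I, hIcard, hIdef⟩
      have hlastI : Fin.last n ∈ I := by
        by_contra hl
        have hdisj : Disjoint I {Fin.last n} := by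
          simp [Finset.disjoint_singleton_right, hl]
        have h1 := hIdef {Fin.last n} hdisj (by simpa using Nat.one_le_iff_ne_zero.mpr hn.ne')
        rw [hfull, hDscen] at h1
        exact hyd (Set.singleton_eq_singleton_iff.mp h1).symm
      have hIne : 1 ≤ I.card := Finset.card_pos.mpr ⟨_, hlastI⟩
      have hcardI' : ((univ : Finset (Fin (n+1))) \ I).card ≤ n := by
        rw [Finset.card_sdiff_of_subset (Finset.subset_univ I), Finset.card_univ, Fintype.card_fin]
        omega
      have hdisj : Disjoint I ((univ : Finset (Fin (n+1))) \ I) := Finset.disjoint_sdiff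
      have h2 := hIdef (univ \ I) hdisj hcardI'
      rw [Finset.sdiff_sdiff_self_left, Finset.univ_inter, hfull] at h2
      have hhit : ∀ j, (AA I ∩ S j).Nonempty := by
        intro j
        rw [Finset.nonempty_iff_ne_empty]
        intro hemp
        have hy : y ∈ scoringRule α (∑ i ∈ I, G i) := by
          rw [h2]; exact Set.mem_singleton _
        rw [hwin I] at hy
        have h3 := hy (x j)
        rw [hEx I hlastI j, hEy I hlastI, hemp] at h3
        simp only [Finset.card_empty, Nat.cast_zero, mul_zero, sub_zero] at h3
        linarith
      have hAAcard : (AA I).card ≤ k := by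
        have himg : (AA I).image Fin.castSucc ⊆ I.erase (Fin.last n) := by
          intro i hi
          simp only [Finset.mem_image] at hi
          obtain ⟨i0, hi0, rfl⟩ := hi
          simp only [hAA, Finset.mem_filter] at hi0
          exact Finset.mem_erase.mpr ⟨(Fin.castSucc_lt_last i0).ne, hi0.2⟩
        have h4 : ((AA I).image Fin.castSucc).card = (AA I).card :=
          Finset.card_image_of_injective _ (Fin.castSucc_injective n)
        have h5 := Finset.card_le_card himg
        rw [h4, Finset.card_erase_of_mem hlastI] at h5
        omega
      obtain ⟨W, hsub, -, hWcard⟩ := Finset.exists_subsuperset_card_eq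
        (Finset.subset_univ (AA I)) hAAcard (by simpa using hkn)
      exact ⟨W, hWcard, fun j =>
        Finset.Nonempty.mono (Finset.inter_subset_inter hsub Finset.Subset.rfl) (hhit j)⟩
    · rintro ⟨W, hWcard, hWhit⟩
      refine ⟨insert (Fin.last n) (W.image Fin.castSucc), ?_, ?_⟩
      · calc (insert (Fin.last n) (W.image Fin.castSucc)).card
            ≤ (W.image Fin.castSucc).card + 1 := Finset.card_insert_le _ _
          _ ≤ k + 1 := by
              rw [Finset.card_image_of_injective _ (Fin.castSucc_injective n), hWcard]
      · intro I' hdisj hcard'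
        rw [hfull]
        apply hmain
        · have hni : Fin.last n ∉ I' :=
            fun h => (Finset.disjoint_left.mp hdisj (Finset.mem_insert_self _ _)) h
          simp [Finset.mem_sdiff, hni]
        · intro j
          obtain ⟨i0, hi0⟩ := hWhit j
          rw [Finset.mem_inter] at hi0
          refine ⟨i0, Finset.mem_inter.mpr ⟨?_, hi0.2⟩⟩
          simp only [hAA, Finset.mem_filter, Finset.mem_univ, true_and, Finset.mem_sdiff]
          have hmem : Fin.castSucc i0 ∈ insert (Fin.last n) (W.image Fin.castSucc) :=
            Finset.mem_insert_of_mem (Finset.mem_image_of_mem _ hi0.1)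
          exact fun h => Finset.disjoint_left.mp hdisj hmem h
end

section
/- Let U = {z_1,…,z_n} be a universe, let S_1,…,S_t be nonempty subsets of U, and let k be a positive integer with k ≤ n. Fix the candidate set C = {x_1,…,x_t, y}. Let G_1,…,G_n be profiles over C such that for each i ∈ [n] and j ∈ [t]: D_{G_i}(y, x_j) = 2 if z_i ∈ S_j and D_{G_i}(y, x_j) = 0 otherwise, and D_{G_i}(x_j, x_ℓ) = 0 for all distinct j, ℓ ∈ [t] (such profiles exist). Then the Optimal Defense instance (C, {G_1,…,G_n}, k_a = n, k_d = k) for the Condorcet voting rule is a Yes instance if and only if there exists W ⊆ U with |W| = k and W ∩ S_j ≠ ∅ for every j ∈ [t] (i.e., the Hitting Set instance (U, {S_1,…,S_t}, k) is a Yes instance). -/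
open Finset

lemma margin_add' {C : Type*} {m : ℕ} (P Q : Multiset (Vote C m)) (x y : C) :
    margin (P + Q) x y = margin P x y + margin Q x y := by
  simp only [margin, Multiset.filter_add, Multiset.card_add]
  push_cast; ring

lemma margin_sum' {C : Type*} {m : ℕ} {ι : Type*} (s : Finset ι) (G : ι → Multiset (Vote C m))
    (x y : C) : margin (∑ i ∈ s, G i) x y = ∑ i ∈ s, margin (G i) x y := by
  classical
  induction s using Finset.cons_induction with
  | empty => simp [margin]
  | cons a s ha ih => rw [Finset.sum_cons, Finset.sum_cons, margin_add', ih]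

lemma margin_antisymm' {C : Type*} {m : ℕ} (P : Multiset (Vote C m)) (x y : C) :
    margin P x y = - margin P y x := by
  simp only [margin]; ring

/-- the Hitting Set reduction instance for Optimal Defense under the
Condorcet voting rule. -/
theorem stmt8 (n t : ℕ) (S : Fin t → Finset (Fin n)) (hS : ∀ j, (S j).Nonempty)
    (k : ℕ) (hk : 0 < k) (hkn : k ≤ n)
    {C : Type} [Fintype C] [DecidableEq C] (hC : Fintype.card C = t + 1)
    (x : Fin t → C) (hxinj : Function.Injective x) (y : C) (hxy : ∀ j, x j ≠ y)
    (G : Fin n → Multiset (Vote C (t + 1)))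
    (hGyx : ∀ i j, margin (G i) y (x j) = if i ∈ S j then 2 else 0)
    (hGxx : ∀ i j l, j ≠ l → margin (G i) (x j) (x l) = 0) :
    DefenseYes condorcetRule G n k ↔
    ∃ W : Finset (Fin n), W.card = k ∧ ∀ j, (W ∩ S j).Nonempty := by
  classical
  have hsurj : ∀ c : C, c = y ∨ ∃ j, c = x j := by
    intro c
    have hA : (insert y (Finset.image x Finset.univ)).card = t + 1 := by
      rw [Finset.card_insert_of_notMem, Finset.card_image_of_injective _ hxinj,
        Finset.card_univ, Fintype.card_fin]
      simp only [Finset.mem_image]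
      rintro ⟨j, -, hj⟩
      exact hxy j hj
    have hcu : c ∈ insert y (Finset.image x Finset.univ) := by
      have := Finset.eq_univ_of_card (insert y (Finset.image x Finset.univ))
        (hA.trans hC.symm)
      rw [this]; exact Finset.mem_univ c
    rcases Finset.mem_insert.mp hcu with h | h
    · exact Or.inl h
    · obtain ⟨j, -, hj⟩ := Finset.mem_image.mp h
      exact Or.inr ⟨j, hj.symm⟩
  have hyx : ∀ (s : Finset (Fin n)) j,
      margin (∑ i ∈ s, G i) y (x j) = 2 * ((s ∩ S j).card : ℤ) := by
    intro s j
    rw [margin_sum']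
    simp only [hGyx]
    rw [Finset.sum_ite_mem, Finset.sum_const]
    push_cast; ring
  have hxy' : ∀ (s : Finset (Fin n)) j,
      margin (∑ i ∈ s, G i) (x j) y = -(2 * ((s ∩ S j).card : ℤ)) := by
    intro s j
    rw [margin_antisymm', hyx]
  have hrule : ∀ s : Finset (Fin n),
      condorcetRule (∑ i ∈ s, G i) = {y} ↔ ∀ j, (s ∩ S j).Nonempty := by
    intro s
    constructor
    · intro h j
      by_contra hne
      rw [Finset.not_nonempty_iff_eq_empty] at hne
      have hnw : ¬ ∃ c, CondorcetWinner (∑ i ∈ s, G i) c := by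
        rintro ⟨c, hc⟩
        rcases hsurj c with rfl | ⟨l, rfl⟩
        · have h1 := hc (x j) (hxy j)
          rw [hyx, hne] at h1
          simp at h1
        · have h1 := hc y (Ne.symm (hxy l))
          rw [hxy'] at h1
          have h2 : (0:ℤ) ≤ ((s ∩ S l).card : ℤ) := Int.ofNat_nonneg _
          omega
      have hmem : x j ∈ condorcetRule (∑ i ∈ s, G i) := Or.inr hnw
      rw [h] at hmem
      exact hxy j hmem
    · intro h
      have hy : CondorcetWinner (∑ i ∈ s, G i) y := by
        intro c hc
        rcases hsurj c with rfl | ⟨j, rfl⟩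
        · exact absurd rfl hc
        · rw [hyx]
          have h2 : 0 < (s ∩ S j).card := Finset.card_pos.mpr (h j)
          omega
      ext c
      simp only [condorcetRule, Set.mem_setOf_eq, Set.mem_singleton_iff]
      constructor
      · rintro (hc | hn)
        · by_contra hcy
          rcases hsurj c with rfl | ⟨j, rfl⟩
          · exact hcy rfl
          · have h1 := hc y (Ne.symm (hxy j))
            rw [hxy'] at h1
            have h2 : (0:ℤ) ≤ ((s ∩ S j).card : ℤ) := Int.ofNat_nonneg _
            omega
        · exact absurd ⟨y, hy⟩ hn
      · rintro rfl; exact Or.inl hy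
  have hfull : condorcetRule (∑ i, G i) = {y} :=
    (hrule Finset.univ).mpr (fun j => by simpa [Finset.univ_inter] using hS j)
  constructor
  · rintro ⟨I, hIcard, hI⟩
    have hdis : Disjoint I (Finset.univ \ I) := Finset.disjoint_sdiff
    have hcard : (Finset.univ \ I).card ≤ n :=
      le_trans (Finset.card_le_univ _) (by simp)
    have h1 := hI (Finset.univ \ I) hdis hcard
    rw [hfull, Finset.sdiff_sdiff_self_left, Finset.univ_inter, hrule] at h1
    obtain ⟨W, hIW, -, hWcard⟩ := Finset.exists_subsuperset_card_eq
      (Finset.subset_univ I) hIcard (by simpa using hkn)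
    refine ⟨W, hWcard, fun j => ?_⟩
    obtain ⟨i, hi⟩ := h1 j
    rw [Finset.mem_inter] at hi
    exact ⟨i, Finset.mem_inter.mpr ⟨hIW hi.1, hi.2⟩⟩
  · rintro ⟨W, hWcard, hW⟩
    refine ⟨W, le_of_eq hWcard, fun I' hdis _ => ?_⟩
    rw [hfull, hrule]
    intro j
    obtain ⟨i, hi⟩ := hW j
    rw [Finset.mem_inter] at hi
    refine ⟨i, Finset.mem_inter.mpr ⟨Finset.mem_sdiff.mpr ⟨Finset.mem_univ i, ?_⟩, hi.2⟩⟩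
    exact Finset.disjoint_left.mp hdis hi.1
end
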